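/- Let 0 < δ ≤ r ≤ 1/2 and a, b ∈ ℝ, and set h = |b − a|. Then λ((𝒱 + a) ∩ (𝒱 + b) ∩ {(x,y) : δ ≤ y ≤ r}) equals log(r/δ) − h·(1/δ − 1/r) if h ≤ δ; equals log(r/h) − 1 + h/r if δ < h ≤ r; and equals 0 if h > r. Here 𝒱 + s denotes the horizontal translate {(x+s, y) : (x,y) ∈ 𝒱}. -/

import Mathlib

open MeasureTheory

/-- The hyperbolic area measure on the upper half-plane: density `1/y²` w.r.t. Lebesgue. -/
noncomputable def hypMeasure : Measure (ℝ × ℝ) :=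
  volume.withDensity (fun p => ENNReal.ofReal (1 / p.2 ^ 2))

/-- The set 𝒱 = {(x,y) : y > 0, 2|x| ≤ y ≤ 1/2}. -/
def Vset : Set (ℝ × ℝ) :=
  {p | 0 < p.2 ∧ 2 * |p.1| ≤ p.2 ∧ p.2 ≤ 1 / 2}

/-- Horizontal translate of a subset of the plane. -/
def htrans (s : ℝ) (A : Set (ℝ × ℝ)) : Set (ℝ × ℝ) := (fun p => (p.1 + s, p.2)) '' A

lemma htrans_Vset (s : ℝ) :
    htrans s Vset = {p : ℝ × ℝ | 0 < p.2 ∧ 2 * |p.1 - s| ≤ p.2 ∧ p.2 ≤ 1 / 2} := by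
  ext p
  constructor
  · rintro ⟨q, hq, rfl⟩
    simpa [Vset] using hq
  · intro hp
    exact ⟨(p.1 - s, p.2), hp, by simp⟩

lemma key (m r h a b : ℝ) (hm0 : 0 < m) (hmr : m ≤ r) (hh0 : 0 ≤ h) (hhm : h ≤ m)
    (hab : max a b - min a b = h) :
    hypMeasure {p : ℝ × ℝ | m ≤ p.2 ∧ p.2 ≤ r ∧ max a b - p.2 / 2 ≤ p.1 ∧ p.1 ≤ min a b + p.2 / 2}
      = ENNReal.ofReal (Real.log (r / m) + h / r - h / m) := by
  set S : Set (ℝ × ℝ) :=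
    {p : ℝ × ℝ | m ≤ p.2 ∧ p.2 ≤ r ∧ max a b - p.2 / 2 ≤ p.1 ∧ p.1 ≤ min a b + p.2 / 2} with hS
  have hSm : MeasurableSet S := by
    have hEq : S = ({p : ℝ × ℝ | m ≤ p.2} ∩ {p | p.2 ≤ r}) ∩
        ({p | max a b - p.2 / 2 ≤ p.1} ∩ {p | p.1 ≤ min a b + p.2 / 2}) := by
      ext p
      simp only [hS, Set.mem_setOf_eq, Set.mem_inter_iff]
      tauto
    rw [hEq]
    refine (MeasurableSet.inter (MeasurableSet.inter ?_ ?_) (MeasurableSet.inter ?_ ?_))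
    · exact measurableSet_le measurable_const measurable_snd
    · exact measurableSet_le measurable_snd measurable_const
    · exact measurableSet_le (measurable_const.sub (measurable_snd.div_const 2)) measurable_fst
    · exact measurableSet_le measurable_fst (measurable_const.add (measurable_snd.div_const 2))
  have hg : Measurable fun p : ℝ × ℝ => ENNReal.ofReal (1 / p.2 ^ 2) := by
    apply Measurable.ennreal_ofReal
    fun_prop
  have h1 : hypMeasure S
      = ∫⁻ p, S.indicator (fun p : ℝ × ℝ => ENNReal.ofReal (1 / p.2 ^ 2)) p := by
    rw [hypMeasure, withDensity_apply _ hSm, ← lintegral_indicator hSm]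
  rw [h1, Measure.volume_eq_prod,
    lintegral_prod_symm _ ((hg.indicator hSm).aemeasurable)]
  have inner : ∀ y : ℝ,
      (∫⁻ x, S.indicator (fun p : ℝ × ℝ => ENNReal.ofReal (1 / p.2 ^ 2)) (x, y) ∂volume)
        = (Set.Icc m r).indicator (fun y => ENNReal.ofReal ((y - h) / y ^ 2)) y := by
    intro y
    by_cases hy : y ∈ Set.Icc m r
    · have hy0 : 0 < y := lt_of_lt_of_le hm0 hy.1
      have hcalc : ∀ x, S.indicator (fun p : ℝ × ℝ => ENNReal.ofReal (1 / p.2 ^ 2)) (x, y)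
          = (Set.Icc (max a b - y / 2) (min a b + y / 2)).indicator
              (fun _ => ENNReal.ofReal (1 / y ^ 2)) x := by
        intro x
        by_cases hx : x ∈ Set.Icc (max a b - y / 2) (min a b + y / 2)
        · rw [Set.indicator_of_mem hx, Set.indicator_of_mem]
          exact ⟨hy.1, hy.2, hx.1, hx.2⟩
        · rw [Set.indicator_of_notMem hx, Set.indicator_of_notMem]
          intro hmem
          exact hx ⟨hmem.2.2.1, hmem.2.2.2⟩
      simp only [hcalc]
      rw [lintegral_indicator_const measurableSet_Icc, Real.volume_Icc,
        Set.indicator_of_mem hy, ← ENNReal.ofReal_mul (by positivity)]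
      congr 1
      have hlen : min a b + y / 2 - (max a b - y / 2) = y - h := by
        rw [← hab]; ring
      rw [hlen]
      ring
    · rw [Set.indicator_of_notMem hy]
      have hz : ∀ x, S.indicator (fun p : ℝ × ℝ => ENNReal.ofReal (1 / p.2 ^ 2)) (x, y) = 0 := by
        intro x
        apply Set.indicator_of_notMem
        intro hmem
        exact hy ⟨hmem.1, hmem.2.1⟩
      simp only [hz, lintegral_zero]
  simp only [inner]
  rw [lintegral_indicator measurableSet_Icc]
  have hr0 : 0 < r := lt_of_lt_of_le hm0 hmr
  have hcont : ContinuousOn (fun y : ℝ => (y - h) / y ^ 2) (Set.Icc m r) := by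
    apply ContinuousOn.div (by fun_prop) (by fun_prop)
    intro y hy
    have : 0 < y := lt_of_lt_of_le hm0 hy.1
    positivity
  have hint : IntegrableOn (fun y : ℝ => (y - h) / y ^ 2) (Set.Icc m r) :=
    hcont.integrableOn_Icc
  have hpos : ∀ y ∈ Set.Icc m r, 0 ≤ (y - h) / y ^ 2 := by
    intro y hy
    have h1 : 0 ≤ y - h := by linarith [hy.1]
    have h2 : (0:ℝ) < y ^ 2 := by
      have : 0 < y := lt_of_lt_of_le hm0 hy.1
      positivity
    positivity
  rw [← ofReal_integral_eq_lintegral_ofReal hint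
    ((ae_restrict_iff' measurableSet_Icc).mpr (Filter.Eventually.of_forall hpos))]
  congr 1
  rw [MeasureTheory.integral_Icc_eq_integral_Ioc, ← intervalIntegral.integral_of_le hmr]
  have hftc : ∫ y in m..r, (y - h) / y ^ 2
      = (Real.log r + h / r) - (Real.log m + h / m) := by
    apply intervalIntegral.integral_eq_sub_of_hasDerivAt
    · intro y hy
      rw [Set.uIcc_of_le hmr] at hy
      have hy0 : 0 < y := lt_of_lt_of_le hm0 hy.1
      have hy0' : y ≠ 0 := ne_of_gt hy0
      have H : HasDerivAt (fun y : ℝ => Real.log y + h * y⁻¹)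
          (y⁻¹ + h * -(↑y ^ 2)⁻¹) y :=
        (Real.hasDerivAt_log hy0').add ((hasDerivAt_inv hy0').const_mul h)
      have heq : (fun y : ℝ => Real.log y + h / y) = fun y : ℝ => Real.log y + h * y⁻¹ := by
        funext z; rw [div_eq_mul_inv]
      rw [heq]
      refine H.congr_deriv ?_
      field_simp
      ring
    · rw [intervalIntegrable_iff_integrableOn_Icc_of_le hmr]
      exact hint
  rw [hftc, Real.log_div (ne_of_gt hr0) (ne_of_gt hm0)]
  ring

theorem stmt3 (δ r a b : ℝ) (h1 : 0 < δ) (h2 : δ ≤ r) (h3 : r ≤ 1 / 2) :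
    (|b - a| ≤ δ →
      hypMeasure (htrans a Vset ∩ htrans b Vset ∩ {p | δ ≤ p.2 ∧ p.2 ≤ r}) =
        ENNReal.ofReal (Real.log (r / δ) - |b - a| * (1 / δ - 1 / r))) ∧
    (δ < |b - a| → |b - a| ≤ r →
      hypMeasure (htrans a Vset ∩ htrans b Vset ∩ {p | δ ≤ p.2 ∧ p.2 ≤ r}) =
        ENNReal.ofReal (Real.log (r / |b - a|) - 1 + |b - a| / r)) ∧
    (r < |b - a| →
      hypMeasure (htrans a Vset ∩ htrans b Vset ∩ {p | δ ≤ p.2 ∧ p.2 ≤ r}) = 0) := by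
  set h := |b - a| with hh
  have hh0 : 0 ≤ h := abs_nonneg _
  have hmaxmin : max a b - min a b = h := by
    rw [hh, max_sub_min_eq_abs, abs_sub_comm]
  have hset : htrans a Vset ∩ htrans b Vset ∩ {p : ℝ × ℝ | δ ≤ p.2 ∧ p.2 ≤ r} =
      {p : ℝ × ℝ | max δ h ≤ p.2 ∧ p.2 ≤ r ∧ max a b - p.2 / 2 ≤ p.1 ∧
        p.1 ≤ min a b + p.2 / 2} := by
    rw [htrans_Vset, htrans_Vset]
    ext ⟨x, y⟩
    simp only [Set.mem_inter_iff, Set.mem_setOf_eq, max_le_iff]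
    constructor
    · rintro ⟨⟨⟨hy0, hxa, hy12⟩, ⟨_, hxb, _⟩⟩, hδ, hr⟩
      have ha' : -(y / 2) ≤ x - a ∧ x - a ≤ y / 2 := abs_le.mp (by linarith)
      have hb' : -(y / 2) ≤ x - b ∧ x - b ≤ y / 2 := abs_le.mp (by linarith)
      obtain ⟨ha1, ha2⟩ := ha'
      obtain ⟨hb1, hb2⟩ := hb'
      have hmax : max a b - y / 2 ≤ x := by
        rcases max_cases a b with ⟨hm, _⟩ | ⟨hm, _⟩ <;> rw [hm] <;> linarith
      have hmin : x ≤ min a b + y / 2 := by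
        rcases min_cases a b with ⟨hm, _⟩ | ⟨hm, _⟩ <;> rw [hm] <;> linarith
      refine ⟨⟨hδ, ?_⟩, hr, hmax, hmin⟩
      linarith [hmaxmin]
    · rintro ⟨⟨hδ, hhy⟩, hr, hmax, hmin⟩
      have hy0 : 0 < y := lt_of_lt_of_le h1 hδ
      have hy12 : y ≤ 1 / 2 := le_trans hr h3
      have hxa : |x - a| ≤ y / 2 :=
        abs_le.mpr ⟨by linarith [le_max_left a b], by linarith [min_le_left a b]⟩
      have hxb : |x - b| ≤ y / 2 :=
        abs_le.mpr ⟨by linarith [le_max_right a b], by linarith [min_le_right a b]⟩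
      exact ⟨⟨⟨hy0, by linarith, hy12⟩, ⟨hy0, by linarith, hy12⟩⟩, hδ, hr⟩
  refine ⟨?_, ?_, ?_⟩
  · intro hhd
    rw [hset, show max δ h = δ from max_eq_left hhd,
      key δ r h a b h1 h2 hh0 hhd hmaxmin]
    congr 1
    ring
  · intro hδh hhr
    have hh0' : 0 < h := lt_trans h1 hδh
    rw [hset, show max δ h = h from max_eq_right (le_of_lt hδh),
      key h r h a b hh0' hhr hh0 le_rfl hmaxmin]
    congr 1
    rw [div_self (ne_of_gt hh0')]
    ring
  · intro hrh
    rw [hset]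
    have hemp : {p : ℝ × ℝ | max δ h ≤ p.2 ∧ p.2 ≤ r ∧ max a b - p.2 / 2 ≤ p.1 ∧
        p.1 ≤ min a b + p.2 / 2} = ∅ := by
      apply Set.eq_empty_iff_forall_notMem.mpr
      rintro ⟨x, y⟩ ⟨hmy, hyr, _, _⟩
      have := le_max_right δ h
      linarith
    rw [hemp]
    exact measure_empty
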